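/- For the standard Gaussian distribution, the Mills-type ratio Φ(x)(1−Φ(x))/φ(x) is bounded above by Φ(0)(1−Φ(0))/φ(0) = (1/2)√(π/2) for all real x. -/

import Mathlib

open Real MeasureTheory Set

/-- Standard Gaussian pdf. -/
noncomputable def gaussPdf (x : ℝ) : ℝ := (Real.sqrt (2 * π))⁻¹ * Real.exp (-x ^ 2 / 2)

/-- Standard Gaussian cdf. -/
noncomputable def gaussCdf (x : ℝ) : ℝ := ∫ u in Set.Iic x, gaussPdf u

lemma gaussPdf_cont : Continuous gaussPdf := by
  unfold gaussPdf
  continuity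

lemma gaussPdf_pos (x : ℝ) : 0 < gaussPdf x := by
  unfold gaussPdf
  positivity

lemma sqrt_two_pi_pos : (0:ℝ) < Real.sqrt (2 * π) := by
  apply Real.sqrt_pos.2; positivity

lemma gaussPdf_eq (x : ℝ) : gaussPdf x = (Real.sqrt (2 * π))⁻¹ * Real.exp (-(1/2) * x ^ 2) := by
  unfold gaussPdf; ring_nf

lemma gaussPdf_integrable : Integrable gaussPdf := by
  have h : Integrable (fun x : ℝ => Real.exp (-(1/2) * x ^ 2)) :=
    integrable_exp_neg_mul_sq (by norm_num)
  have := h.const_mul (Real.sqrt (2 * π))⁻¹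
  exact this.congr (Filter.Eventually.of_forall fun x => (gaussPdf_eq x).symm)

lemma gaussPdf_integral : ∫ x, gaussPdf x = 1 := by
  have h := integral_gaussian (1/2)
  have h2 : Real.sqrt (π / (1/2)) = Real.sqrt (2 * π) := by norm_num [mul_comm]
  calc ∫ x, gaussPdf x = ∫ x, (Real.sqrt (2 * π))⁻¹ * Real.exp (-(1/2) * x ^ 2) := by
        simp_rw [gaussPdf_eq]
    _ = (Real.sqrt (2 * π))⁻¹ * ∫ x, Real.exp (-(1/2) * x ^ 2) := by
        rw [integral_const_mul]
    _ = 1 := by rw [h, h2, inv_mul_cancel₀ sqrt_two_pi_pos.ne']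

lemma gaussPdf_even (x : ℝ) : gaussPdf (-x) = gaussPdf x := by
  unfold gaussPdf; ring_nf

lemma gaussCdf_add_Ioi (x : ℝ) : gaussCdf x + ∫ u in Set.Ioi x, gaussPdf u = 1 := by
  rw [gaussCdf, intervalIntegral.integral_Iic_add_Ioi gaussPdf_integrable.integrableOn
    gaussPdf_integrable.integrableOn, gaussPdf_integral]

lemma gaussCdf_neg (x : ℝ) : gaussCdf (-x) = 1 - gaussCdf x := by
  have h1 : (∫ u in Set.Ioi x, gaussPdf (-u)) = ∫ u in Set.Iic (-x), gaussPdf u :=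
    integral_comp_neg_Ioi x gaussPdf
  have h2 : (∫ u in Set.Ioi x, gaussPdf (-u)) = ∫ u in Set.Ioi x, gaussPdf u := by
    simp_rw [gaussPdf_even]
  have := gaussCdf_add_Ioi x
  rw [gaussCdf, ← h1, h2]
  linarith

lemma gaussCdf_zero : gaussCdf 0 = 1 / 2 := by
  have := gaussCdf_neg 0
  rw [neg_zero] at this
  linarith

lemma gaussCdf_eq (x : ℝ) : gaussCdf x = 1 / 2 + ∫ t in (0:ℝ)..x, gaussPdf t := by
  rw [← intervalIntegral.integral_Iic_sub_Iic gaussPdf_integrable.integrableOn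
    gaussPdf_integrable.integrableOn]
  rw [← gaussCdf, ← gaussCdf, gaussCdf_zero]
  ring

lemma hasDerivAt_gaussCdf (x : ℝ) : HasDerivAt gaussCdf (gaussPdf x) x := by
  have h : gaussCdf = fun y => 1 / 2 + ∫ t in (0:ℝ)..y, gaussPdf t := funext gaussCdf_eq
  rw [h]
  exact ((gaussPdf_cont.integral_hasStrictDerivAt 0 x).hasDerivAt).const_add (1/2)

/-- The auxiliary function in the concavity argument. -/
noncomputable def gK (x : ℝ) : ℝ := (2 * gaussCdf x - 1) - (Real.sqrt (2 * π) / 4) * x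

/-- The function whose nonnegativity is Pólya's inequality. -/
noncomputable def gJ (x : ℝ) : ℝ := (2 * gaussCdf x - 1) ^ 2 - 1 + Real.exp (-x ^ 2 / 2)

lemma gJ_zero : gJ 0 = 0 := by
  simp [gJ, gaussCdf_zero]

lemma gK_zero : gK 0 = 0 := by
  simp [gK, gaussCdf_zero]

lemma hasDerivAt_gJ (x : ℝ) : HasDerivAt gJ (4 * gaussPdf x * gK x) x := by
  have h1 : HasDerivAt (fun y : ℝ => (2 * gaussCdf y - 1) ^ 2)
      (2 * (2 * gaussCdf x - 1) * (2 * gaussPdf x)) x := by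
    have := (((hasDerivAt_gaussCdf x).const_mul 2).sub_const 1).pow 2
    simpa [mul_comm, mul_assoc, mul_left_comm, Pi.pow_def] using this
  have h2 : HasDerivAt (fun y : ℝ => Real.exp (-y ^ 2 / 2)) (-x * Real.exp (-x ^ 2 / 2)) x := by
    have hinner : HasDerivAt (fun y : ℝ => -y ^ 2 / 2) (-x) x := by
      have := ((hasDerivAt_pow 2 x).neg).div_const 2
      simpa using this.congr_deriv (by ring)
    simpa [mul_comm] using hinner.exp
  have := (h1.sub_const 1).add h2
  refine this.congr_deriv ?_
  have hphi : Real.exp (-x ^ 2 / 2) = Real.sqrt (2 * π) * gaussPdf x := by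
    rw [gaussPdf, ← mul_assoc, mul_inv_cancel₀ sqrt_two_pi_pos.ne', one_mul]
  rw [gK, hphi]; ring

lemma gK_concave : ConcaveOn ℝ (Set.Ici (0:ℝ)) gK := by
  have hderiv : ∀ x : ℝ, HasDerivAt gK (2 * gaussPdf x - Real.sqrt (2 * π) / 4) x := by
    intro x
    have h1 := ((hasDerivAt_gaussCdf x).const_mul 2).sub_const 1
    have h2 : HasDerivAt (fun y : ℝ => Real.sqrt (2 * π) / 4 * y) (Real.sqrt (2 * π) / 4) x := by
      simpa using (hasDerivAt_id x).const_mul (Real.sqrt (2 * π) / 4)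
    exact h1.sub h2
  refine AntitoneOn.concaveOn_of_deriv (convex_Ici 0)
    (fun x _ => (hderiv x).continuousAt.continuousWithinAt)
    (fun x _ => ((hderiv x).differentiableAt).differentiableWithinAt) ?_
  intro a ha b hb hab
  rw [interior_Ici] at ha hb
  rw [(hderiv a).deriv, (hderiv b).deriv]
  have : gaussPdf b ≤ gaussPdf a := by
    rw [gaussPdf, gaussPdf]
    have : Real.exp (-b ^ 2 / 2) ≤ Real.exp (-a ^ 2 / 2) := by
      apply Real.exp_le_exp.2
      have : a ^ 2 ≤ b ^ 2 := by nlinarith [ha.out, hb.out]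
      linarith
    exact mul_le_mul_of_nonneg_left this (by positivity)
  linarith

lemma gJ_tendsto : Filter.Tendsto gJ Filter.atTop (nhds 0) := by
  have hcdf : Filter.Tendsto gaussCdf Filter.atTop (nhds 1) := by
    have h : Filter.Tendsto (fun x : ℝ => ∫ t in (0:ℝ)..x, gaussPdf t) Filter.atTop
        (nhds (∫ t in Set.Ioi (0:ℝ), gaussPdf t)) :=
      intervalIntegral_tendsto_integral_Ioi 0 gaussPdf_integrable.integrableOn Filter.tendsto_id
    have hval : (∫ t in Set.Ioi (0:ℝ), gaussPdf t) = 1 / 2 := by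
      have := gaussCdf_add_Ioi 0
      rw [gaussCdf_zero] at this; linarith
    rw [hval] at h
    have : Filter.Tendsto (fun x : ℝ => 1 / 2 + ∫ t in (0:ℝ)..x, gaussPdf t) Filter.atTop
        (nhds ((1:ℝ) / 2 + 1 / 2)) := h.const_add (1/2)
    norm_num at this
    exact this.congr (fun x => (gaussCdf_eq x).symm)
  have h1 : Filter.Tendsto (fun x : ℝ => (2 * gaussCdf x - 1) ^ 2 - 1) Filter.atTop
      (nhds 0) := by
    have := ((hcdf.const_mul 2).sub_const 1).pow 2
    have h2 := this.sub_const 1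
    norm_num at h2
    exact h2
  have h3 : Filter.Tendsto (fun x : ℝ => Real.exp (-x ^ 2 / 2)) Filter.atTop (nhds 0) := by
    apply Real.tendsto_exp_atBot.comp
    apply Filter.Tendsto.atBot_div_const (by norm_num : (0:ℝ) < 2)
    apply Filter.tendsto_neg_atBot_iff.2
    exact Filter.tendsto_pow_atTop (by norm_num)
  have := h1.add h3
  norm_num at this
  exact this

lemma gJ_nonneg {x : ℝ} (hx : 0 ≤ x) : 0 ≤ gJ x := by
  rcases le_or_gt 0 (gK x) with hK | hK
  · -- K x ≥ 0 : by concavity K ≥ 0 on [0,x], so gJ monotone on [0,x]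
    have hKnn : ∀ y ∈ Set.Icc (0:ℝ) x, 0 ≤ gK y := by
      intro y hy
      rcases eq_or_lt_of_le hx with h0 | h0
      · have : y = 0 := le_antisymm (hy.2.trans h0.symm.le) hy.1
        rw [this, gK_zero]
      · have hyx : y / x ∈ Set.Icc (0:ℝ) 1 :=
          ⟨div_nonneg hy.1 hx, (div_le_one h0).2 hy.2⟩
        have hcomb := gK_concave.2 (Set.self_mem_Ici) (Set.mem_Ici.2 (le_of_lt h0))
          (show (0:ℝ) ≤ 1 - y / x by linarith [hyx.2]) (show (0:ℝ) ≤ y / x from hyx.1)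
          (show (1 - y / x) + y / x = 1 by ring)
        have harg : (1 - y / x) • (0:ℝ) + (y / x) • x = y := by
          rw [smul_eq_mul, smul_eq_mul, mul_zero, zero_add, div_mul_cancel₀ _ h0.ne']
        rw [harg, gK_zero] at hcomb
        have : 0 ≤ (y / x) * gK x := mul_nonneg hyx.1 hK
        calc (0:ℝ) ≤ (1 - y/x) • (0:ℝ) + (y/x) • gK x := by
              simpa [smul_eq_mul] using this
          _ ≤ gK y := hcomb
    have hmono : MonotoneOn gJ (Set.Icc 0 x) := by
      apply monotoneOn_of_deriv_nonneg (convex_Icc 0 x)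
        (fun y _ => (hasDerivAt_gJ y).continuousAt.continuousWithinAt)
        (fun y _ => ((hasDerivAt_gJ y).differentiableAt).differentiableWithinAt)
      intro y hy
      rw [interior_Icc] at hy
      rw [(hasDerivAt_gJ y).deriv]
      have := hKnn y ⟨hy.1.le, hy.2.le⟩
      have := (gaussPdf_pos y).le
      positivity
    have := hmono (Set.left_mem_Icc.2 hx) (Set.right_mem_Icc.2 hx) hx
    rw [gJ_zero] at this
    exact this
  · -- K x < 0 : then x > 0, K ≤ 0 on [x,∞), gJ antitone there, and gJ → 0
    have hx0 : 0 < x := by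
      rcases eq_or_lt_of_le hx with h0 | h0
      · exfalso; rw [← h0, gK_zero] at hK; exact lt_irrefl 0 hK
      · exact h0
    have hKnp : ∀ y, x ≤ y → gK y ≤ 0 := by
      intro y hy
      by_contra hpos
      push_neg at hpos
      have hy0 : 0 < y := lt_of_lt_of_le hx0 hy
      have hxy : x / y ∈ Set.Icc (0:ℝ) 1 :=
        ⟨div_nonneg hx0.le hy0.le, (div_le_one hy0).2 hy⟩
      have hcomb := gK_concave.2 (Set.self_mem_Ici) (Set.mem_Ici.2 hy0.le)
        (show (0:ℝ) ≤ 1 - x / y by linarith [hxy.2]) (show (0:ℝ) ≤ x / y from hxy.1)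
        (show (1 - x / y) + x / y = 1 by ring)
      have harg : (1 - x / y) • (0:ℝ) + (x / y) • y = x := by
        rw [smul_eq_mul, smul_eq_mul, mul_zero, zero_add, div_mul_cancel₀ _ hy0.ne']
      rw [harg, gK_zero] at hcomb
      have hposxy : 0 < x / y := div_pos hx0 hy0
      have : 0 < (x / y) * gK y := mul_pos hposxy hpos
      simp only [smul_eq_mul, mul_zero, zero_add] at hcomb
      linarith
    have hanti : AntitoneOn gJ (Set.Ici x) := by
      apply antitoneOn_of_deriv_nonpos (convex_Ici x)
        (fun y _ => (hasDerivAt_gJ y).continuousAt.continuousWithinAt)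
        (fun y _ => ((hasDerivAt_gJ y).differentiableAt).differentiableWithinAt)
      intro y hy
      rw [interior_Ici] at hy
      rw [(hasDerivAt_gJ y).deriv]
      have h1 := hKnp y hy.out.le
      have h2 := (gaussPdf_pos y).le
      have : 0 ≤ 4 * gaussPdf y * (-gK y) :=
        mul_nonneg (by positivity) (neg_nonneg.2 h1)
      nlinarith
    refine le_of_tendsto gJ_tendsto ?_
    filter_upwards [Filter.eventually_ge_atTop x] with y hy
    exact hanti (Set.self_mem_Ici) hy hy

lemma key_bound (x : ℝ) : gaussCdf x * (1 - gaussCdf x) ≤ 1 / 4 * Real.exp (-x ^ 2 / 2) := by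
  have key : ∀ y : ℝ, 0 ≤ y → gaussCdf y * (1 - gaussCdf y) ≤ 1 / 4 * Real.exp (-y ^ 2 / 2) := by
    intro y hy
    have := gJ_nonneg hy
    rw [gJ] at this
    nlinarith [this]
  rcases le_or_gt 0 x with hx | hx
  · exact key x hx
  · have := key (-x) (by linarith)
    rw [gaussCdf_neg] at this
    calc gaussCdf x * (1 - gaussCdf x) = (1 - gaussCdf x) * (1 - (1 - gaussCdf x)) := by ring
      _ ≤ 1 / 4 * Real.exp (-(-x) ^ 2 / 2) := this
      _ = 1 / 4 * Real.exp (-x ^ 2 / 2) := by ring_nf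

lemma sqrt_half_pi : Real.sqrt (2 * π) = 2 * Real.sqrt (π / 2) := by
  rw [show (2:ℝ) * π = 4 * (π / 2) by ring, show (4:ℝ) = 2 ^ 2 by norm_num,
    Real.sqrt_mul (by positivity), Real.sqrt_sq (by norm_num)]

/-- The Gaussian Mills-type ratio `Φ(x)(1-Φ(x))/φ(x)` is maximized at `0`, where its
value is `(1/2)√(π/2)`. -/
theorem stmt1 :
    gaussCdf 0 * (1 - gaussCdf 0) / gaussPdf 0 = (1 / 2) * Real.sqrt (π / 2) ∧
    ∀ x : ℝ, gaussCdf x * (1 - gaussCdf x) / gaussPdf x ≤ (1 / 2) * Real.sqrt (π / 2) := by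
  constructor
  · have h0 : gaussPdf 0 = (Real.sqrt (2 * π))⁻¹ := by
      simp [gaussPdf]
    rw [gaussCdf_zero, h0, div_eq_mul_inv, inv_inv, sqrt_half_pi]
    ring
  · intro x
    have hpos := gaussPdf_pos x
    rw [div_le_iff₀ hpos]
    have hval : (1 / 2) * Real.sqrt (π / 2) * gaussPdf x = 1 / 4 * Real.exp (-x ^ 2 / 2) := by
      rw [gaussPdf, sqrt_half_pi]
      have h : Real.sqrt (π / 2) * (2 * Real.sqrt (π / 2))⁻¹ = 1 / 2 := by
        rw [mul_inv, ← mul_assoc, mul_comm (Real.sqrt (π / 2)) (2:ℝ)⁻¹, mul_assoc,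
          mul_inv_cancel₀ (by positivity : Real.sqrt (π / 2) ≠ 0)]
        norm_num
      calc (1 / 2) * Real.sqrt (π / 2) * ((2 * Real.sqrt (π / 2))⁻¹ * Real.exp (-x ^ 2 / 2))
          = (1 / 2) * (Real.sqrt (π / 2) * (2 * Real.sqrt (π / 2))⁻¹) * Real.exp (-x ^ 2 / 2) := by
            ring
        _ = 1 / 4 * Real.exp (-x ^ 2 / 2) := by rw [h]; ring
    rw [hval]
    exact key_bound x
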